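/- Let F be a field and let (P_n)_{n∈ℕ} and (Q_n)_{n∈ℕ} be holonomic sequences in F of degree at most d and of depths k and ℓ respectively, where in each case the leading coefficient polynomial a_0 satisfies a_0(n) ≠ 0 for every n ∈ ℕ. Then the sum (P_n + Q_n)_{n∈ℕ} is holonomic of depth K ≤ k + ℓ and degree D ≤ (k+ℓ)²·d; more precisely, there exist K ≤ k+ℓ and polynomials c_0,…,c_K ∈ F[N], not all zero, each of degree at most (k+ℓ)²·d, such that c_0(n)·(P_{n+K}+Q_{n+K}) + c_1(n)·(P_{n+K−1}+Q_{n+K−1}) + ⋯ + c_K(n)·(P_n+Q_n) = 0 for all sufficiently large n. -/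

import Mathlib

open Finset

namespace Stmt5Aux

open Polynomial

variable {F : Type*} [Field F]

/-- shift a polynomial: `p(X + s)`. -/
noncomputable def shf (s : ℕ) (p : Polynomial F) : Polynomial F := p.comp (X + C (s : F))

lemma shf_eval (s : ℕ) (p : Polynomial F) (x : F) : (shf s p).eval x = p.eval (x + s) := by
  simp [shf]

lemma shf_natDegree_le (s : ℕ) (p : Polynomial F) (n : ℕ) (h : p.natDegree ≤ n) :
    (shf s p).natDegree ≤ n := by
  rw [shf, natDegree_comp, natDegree_X_add_C, mul_one]
  exact h

lemma holo_rows (d k' T : ℕ) (P : ℕ → F)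
    (a : Fin (k' + 1 + 1) → Polynomial F)
    (hadeg : ∀ i, (a i).natDegree ≤ d)
    (hP : ∀ n : ℕ, ∑ i : Fin (k' + 1 + 1), (a i).eval (n : F) * P (n + (k' + 1 - (i : ℕ))) = 0) :
    ∃ G : ℕ → Fin (k' + 1) → Polynomial F,
      ∀ j ≤ k' + 1 + T,
        (∀ i, (G j i).natDegree ≤ (T + 1) * d) ∧
        ∀ n : ℕ,
          (∏ s ∈ Finset.range (T + 1), (a 0).eval ((n : F) + s)) * P (n + j)
            = ∑ i : Fin (k' + 1), (G j i).eval (n : F) * P (n + (i : ℕ)) := by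
  classical
  set Cm : ℕ → Matrix (Fin (k' + 1)) (Fin (k' + 1)) (Polynomial F) := fun t i u =>
    if (i : ℕ) = k' then -(shf t (a ⟨k' + 1 - (u : ℕ), by omega⟩))
    else if (u : ℕ) = (i : ℕ) + 1 then shf t (a 0) else 0 with hCm
  set Mm : ℕ → Matrix (Fin (k' + 1)) (Fin (k' + 1)) (Polynomial F) := fun t =>
    Nat.rec 1 (fun t Mt => Cm t * Mt) t with hMm
  have hMm0 : Mm 0 = 1 := rfl
  have hMmsucc : ∀ t, Mm (t + 1) = Cm t * Mm t := fun t => rfl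
  -- the key one-step consequence of the recurrence
  have hstep : ∀ m : ℕ, (a 0).eval (m : F) * P (m + (k' + 1)) =
      ∑ u : Fin (k' + 1), (-((a ⟨k' + 1 - (u : ℕ), by omega⟩).eval (m : F))) * P (m + (u : ℕ)) := by
    intro m
    have h := hP m
    rw [Fin.sum_univ_succ] at h
    have hrev : ∑ i : Fin (k' + 1), (a i.succ).eval (m : F) * P (m + (k' + 1 - ((i.succ : Fin (k' + 1 + 1)) : ℕ)))
        = ∑ u : Fin (k' + 1), (a ⟨k' + 1 - (u : ℕ), by omega⟩).eval (m : F) * P (m + (u : ℕ)) := by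
      refine Fintype.sum_equiv Fin.revPerm _ _ fun i => ?_
      have h1 : ((Fin.revPerm i : Fin (k' + 1)) : ℕ) = k' - (i : ℕ) := by
        simp [Fin.val_rev]
      have h2 : (⟨k' + 1 - ((Fin.revPerm i : Fin (k' + 1)) : ℕ), by omega⟩ : Fin (k' + 1 + 1)) = i.succ := by
        apply Fin.ext
        simp [h1, Fin.val_succ]
        omega
      rw [h2, h1]
      congr 2
      simp [Fin.val_succ]
    rw [hrev] at h
    have h0 : (k' + 1 - ((0 : Fin (k' + 1 + 1)) : ℕ)) = k' + 1 := by simp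
    rw [h0] at h
    rw [← sub_eq_zero]
    simp only [neg_mul, Finset.sum_neg_distrib, sub_neg_eq_add]
    exact h
  have key : ∀ t (n : ℕ) (i : Fin (k' + 1)),
      (∏ s ∈ Finset.range t, (a 0).eval ((n : F) + s)) * P (n + t + (i : ℕ))
        = ∑ i' : Fin (k' + 1), (Mm t i i').eval (n : F) * P (n + (i' : ℕ)) := by
    intro t
    induction t with
    | zero =>
      intro n i
      rw [hMm0]
      simp only [Finset.range_zero, Finset.prod_empty, one_mul, Matrix.one_apply]
      rw [Finset.sum_eq_single i]
      · simp
      · intro b _ hb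
        simp [Ne.symm hb]
      · simp
    | succ t ih =>
      intro n i
      have hrhs : ∑ i' : Fin (k' + 1), (Mm (t + 1) i i').eval (n : F) * P (n + (i' : ℕ))
          = ∑ u : Fin (k' + 1), (Cm t i u).eval (n : F) *
              ((∏ s ∈ Finset.range t, (a 0).eval ((n : F) + s)) * P (n + t + (u : ℕ))) := by
        have e1 : ∀ i' : Fin (k' + 1), (Mm (t + 1) i i').eval (n : F) * P (n + (i' : ℕ))
            = ∑ u : Fin (k' + 1), (Cm t i u).eval (n : F) * (Mm t u i').eval (n : F) * P (n + (i' : ℕ)) := by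
          intro i'
          rw [hMmsucc, Matrix.mul_apply, eval_finset_sum, Finset.sum_mul]
          exact Finset.sum_congr rfl fun u _ => by rw [eval_mul]
        rw [Finset.sum_congr rfl fun i' _ => e1 i']
        rw [Finset.sum_comm]
        refine Finset.sum_congr rfl fun u _ => ?_
        rw [ih n u, Finset.mul_sum]
        exact Finset.sum_congr rfl fun i' _ => by ring
      rw [hrhs]
      by_cases hik : (i : ℕ) = k'
      · have hCval : ∀ u : Fin (k' + 1), Cm t i u = -(shf t (a ⟨k' + 1 - (u : ℕ), by omega⟩)) := by
          intro u; simp [hCm, hik]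
        rw [Finset.sum_congr rfl (fun u _ => by rw [hCval u])]
        have : ∀ u : Fin (k' + 1),
            (-(shf t (a ⟨k' + 1 - (u : ℕ), by omega⟩))).eval (n : F) *
              ((∏ s ∈ Finset.range t, (a 0).eval ((n : F) + s)) * P (n + t + (u : ℕ)))
            = (∏ s ∈ Finset.range t, (a 0).eval ((n : F) + s)) *
              ((-((a ⟨k' + 1 - (u : ℕ), by omega⟩).eval (((n + t : ℕ) : F)))) * P ((n + t) + (u : ℕ))) := by
          intro u
          rw [eval_neg, shf_eval]
          push_cast
          ring
        rw [Finset.sum_congr rfl (fun u _ => this u), ← Finset.mul_sum]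
        rw [← hstep (n + t)]
        rw [Finset.prod_range_succ]
        have harg : n + t + (k' + 1) = n + (t + 1) + (i : ℕ) := by omega
        rw [harg]
        push_cast
        ring
      · have hilt : (i : ℕ) + 1 < k' + 1 := by omega
        rw [Finset.sum_eq_single (⟨(i : ℕ) + 1, hilt⟩ : Fin (k' + 1))]
        · have hCval : Cm t i ⟨(i : ℕ) + 1, hilt⟩ = shf t (a 0) := by
            simp [hCm, hik]
          rw [hCval, shf_eval, Finset.prod_range_succ]
          have harg : n + t + ((⟨(i : ℕ) + 1, hilt⟩ : Fin (k' + 1)) : ℕ) = n + (t + 1) + (i : ℕ) := by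
            simp; omega
          rw [harg]
          ring
        · intro u _ hu
          have hCval : Cm t i u = 0 := by
            have : (u : ℕ) ≠ (i : ℕ) + 1 := by
              intro hc; apply hu; apply Fin.ext; simp [hc]
            simp [hCm, hik, this]
          rw [hCval]; simp
        · simp
  have keydeg : ∀ t (i i' : Fin (k' + 1)), (Mm t i i').natDegree ≤ t * d := by
    intro t
    induction t with
    | zero =>
      intro i i'
      rw [hMm0, Matrix.one_apply]
      split <;> simp
    | succ t ih =>
      intro i i'
      rw [hMmsucc, Matrix.mul_apply]
      refine natDegree_sum_le_of_forall_le _ _ fun u _ => ?_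
      refine natDegree_mul_le.trans ?_
      have hC : (Cm t i u).natDegree ≤ d := by
        rw [hCm]
        dsimp only
        split
        · rw [natDegree_neg]; exact shf_natDegree_le _ _ _ (hadeg _)
        · split
          · exact shf_natDegree_le _ _ _ (hadeg 0)
          · simp
      have hM := ih u i'
      have : (t + 1) * d = d + t * d := by ring
      omega
  refine ⟨fun j i => (∏ s ∈ Finset.Ico (j - k') (T + 1), shf s (a 0)) *
      Mm (j - k') ⟨j - (j - k'), by omega⟩ i, ?_⟩
  intro j hj
  have ht : j - k' ≤ T + 1 := by omega
  constructor
  · intro i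
    refine natDegree_mul_le.trans ?_
    have h1 : (∏ s ∈ Finset.Ico (j - k') (T + 1), shf s (a 0)).natDegree ≤ (T + 1 - (j - k')) * d := by
      refine (natDegree_prod_le _ _).trans ?_
      calc ∑ s ∈ Finset.Ico (j - k') (T + 1), (shf s (a 0)).natDegree
          ≤ ∑ _s ∈ Finset.Ico (j - k') (T + 1), d :=
            Finset.sum_le_sum fun s _ => shf_natDegree_le _ _ _ (hadeg 0)
        _ = (T + 1 - (j - k')) * d := by rw [Finset.sum_const, Nat.card_Ico, smul_eq_mul]
    have h2 := keydeg (j - k') ⟨j - (j - k'), by omega⟩ i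
    have h3 : (T + 1 - (j - k')) * d + (j - k') * d = (T + 1) * d := by
      rw [← Nat.add_mul]
      congr 1
      omega
    omega
  · intro n
    have hsplit : (∏ s ∈ Finset.range (T + 1), (a 0).eval ((n : F) + s)) =
        (∏ s ∈ Finset.range (j - k'), (a 0).eval ((n : F) + s)) *
          ∏ s ∈ Finset.Ico (j - k') (T + 1), (a 0).eval ((n : F) + s) := by
      rw [Finset.range_eq_Ico, ← Finset.prod_Ico_consecutive _ (Nat.zero_le _) ht,
        ← Finset.range_eq_Ico]
    have hkey := key (j - k') n ⟨j - (j - k'), by omega⟩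
    have harg : n + (j - k') + (j - (j - k')) = n + j := by omega
    rw [show ((⟨j - (j - k'), by omega⟩ : Fin (k' + 1)) : ℕ) = j - (j - k') from rfl, harg] at hkey
    rw [hsplit, mul_comm (∏ s ∈ Finset.range (j - k'), (a 0).eval ((n : F) + s)), mul_assoc, hkey,
      Finset.mul_sum]
    refine Finset.sum_congr rfl fun i _ => ?_
    rw [eval_mul, eval_prod]
    rw [Finset.prod_congr rfl (fun s _ => shf_eval s (a 0) (n : F))]
    ring

noncomputable instance degreeLT_fd {F : Type*} [Field F] (n : ℕ) :
    Module.Finite F (Polynomial.degreeLT F n) :=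
  Module.Finite.equiv (Polynomial.degreeLTEquiv F n).symm

lemma finrank_degreeLT {F : Type*} [Field F] (n : ℕ) :
    Module.finrank F (Polynomial.degreeLT F n) = n := by
  rw [LinearEquiv.finrank_eq (Polynomial.degreeLTEquiv F n), Module.finrank_fin_fun]

lemma swap_sum {F : Type*} [CommRing F] {ι κ : Type*} [Fintype ι] [Fintype κ]
    (D : F) (z : ι → F) (g : ι → κ → F) (p : κ → F) :
    ∑ j, z j * (D * ∑ i, g j i * p i) = D * ∑ i, (∑ j, z j * g j i) * p i := by
  simp only [Finset.mul_sum, Finset.sum_mul]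
  rw [Finset.sum_comm]
  exact Finset.sum_congr rfl fun i _ => Finset.sum_congr rfl fun j _ => by ring

end Stmt5Aux

open Stmt5Aux

/-- Closure of holonomic sequences under addition: if `(P n)` and `(Q n)` are holonomic of
degree at most `d` and depths `k` and `l` respectively (with leading coefficient polynomial
nonvanishing on ℕ), then `(P n + Q n)` is holonomic of depth `K ≤ k + l` and degree
at most `(k + l)² · d`, the recurrence holding for all sufficiently large `n`. -/
theorem stmt5 {F : Type*} [Field F] (d k l : ℕ) (P Q : ℕ → F)
    (a : Fin (k + 1) → Polynomial F) (b : Fin (l + 1) → Polynomial F)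
    (ha0 : ∀ n : ℕ, (a 0).eval (n : F) ≠ 0) (hb0 : ∀ n : ℕ, (b 0).eval (n : F) ≠ 0)
    (hadeg : ∀ i, (a i).degree ≤ (d : ℕ)) (hbdeg : ∀ i, (b i).degree ≤ (d : ℕ))
    (hP : ∀ n : ℕ, ∑ i : Fin (k + 1), (a i).eval (n : F) * P (n + (k - (i : ℕ))) = 0)
    (hQ : ∀ n : ℕ, ∑ i : Fin (l + 1), (b i).eval (n : F) * Q (n + (l - (i : ℕ))) = 0) :
    ∃ (K : ℕ) (c : Fin (K + 1) → Polynomial F), K ≤ k + l ∧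
      (∃ i, c i ≠ 0) ∧ (∀ i, (c i).degree ≤ ((k + l) ^ 2 * d : ℕ)) ∧
      ∃ N : ℕ, ∀ n ≥ N,
        ∑ i : Fin (K + 1), (c i).eval (n : F) *
          (P (n + (K - (i : ℕ))) + Q (n + (K - (i : ℕ)))) = 0 := by
  classical
  have hadeg' : ∀ i, (a i).natDegree ≤ d := fun i => Polynomial.natDegree_le_iff_degree_le.mpr (hadeg i)
  have hbdeg' : ∀ i, (b i).natDegree ≤ d := fun i => Polynomial.natDegree_le_iff_degree_le.mpr (hbdeg i)
  rcases Nat.eq_zero_or_pos k with hk0 | hkpos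
  · -- k = 0 : P is identically zero
    subst hk0
    have hP0 : ∀ n : ℕ, P n = 0 := by
      intro n
      have h := hP n
      simp only [Fin.sum_univ_succ, Fin.sum_univ_zero] at h
      have : (a 0).eval (n : F) * P n = 0 := by simpa using h
      exact (mul_eq_zero.mp this).resolve_left (ha0 n)
    rcases Nat.eq_zero_or_pos l with hl0 | hlpos
    · subst hl0
      refine ⟨0, fun _ => 1, le_refl _, ⟨0, one_ne_zero⟩, fun i => by simp, 0, fun n _ => ?_⟩
      have hQ0 : Q n = 0 := by
        have h := hQ n
        simp only [Fin.sum_univ_succ, Fin.sum_univ_zero] at h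
        have : (b 0).eval (n : F) * Q n = 0 := by simpa using h
        exact (mul_eq_zero.mp this).resolve_left (hb0 n)
      simp [hP0, hQ0]
    · refine ⟨l, b, by omega, ⟨0, fun h => hb0 0 (by rw [h]; simp)⟩, fun i => ?_, 0, fun n _ => ?_⟩
      · refine (hbdeg i).trans ?_
        exact_mod_cast Nat.le_mul_of_pos_left d (by positivity)
      · have := hQ n
        simp only [hP0, zero_add]
        simpa using this
  rcases Nat.eq_zero_or_pos l with hl0 | hlpos
  · -- l = 0 : Q is identically zero
    subst hl0
    have hQ0 : ∀ n : ℕ, Q n = 0 := by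
      intro n
      have h := hQ n
      simp only [Fin.sum_univ_succ, Fin.sum_univ_zero] at h
      have : (b 0).eval (n : F) * Q n = 0 := by simpa using h
      exact (mul_eq_zero.mp this).resolve_left (hb0 n)
    refine ⟨k, a, by omega, ⟨0, fun h => ha0 0 (by rw [h]; simp)⟩, fun i => ?_, 0, fun n _ => ?_⟩
    · refine (hadeg i).trans ?_
      exact_mod_cast Nat.le_mul_of_pos_left d (by positivity)
    · have := hP n
      simp only [hQ0, add_zero]
      simpa using this
  -- main case : k, l ≥ 1
  obtain ⟨k', rfl⟩ : ∃ k', k = k' + 1 := ⟨k - 1, by omega⟩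
  obtain ⟨l', rfl⟩ : ∃ l', l = l' + 1 := ⟨l - 1, by omega⟩
  obtain ⟨G, hG⟩ := holo_rows d k' (l' + 1) P a hadeg' hP
  obtain ⟨H, hH⟩ := holo_rows d l' (k' + 1) Q b hbdeg' hQ
  set K := k' + 1 + (l' + 1) with hKdef
  set M := K ^ 2 * d with hMdef
  set A1 := M + (l' + 1 + 1) * d + 1 with hA1def
  set A2 := M + (k' + 1 + 1) * d + 1 with hA2def
  have hHb : ∀ j ≤ K, (∀ i, (H j i).natDegree ≤ (k' + 1 + 1) * d) ∧ ∀ n : ℕ,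
      (∏ s ∈ Finset.range (k' + 1 + 1), (b 0).eval ((n : F) + s)) * Q (n + j)
        = ∑ i : Fin (l' + 1), (H j i).eval (n : F) * Q (n + (i : ℕ)) := by
    intro j hj; exact hH j (by omega)
  have hmemG : ∀ (p : Fin (K + 1) × Fin (M + 1)) (i : Fin (k' + 1)),
      (Polynomial.X ^ ((p.2 : ℕ)) * G (p.1 : ℕ) i) ∈ Polynomial.degreeLT F A1 := by
    intro p i
    rw [Polynomial.mem_degreeLT]
    have h1 : (Polynomial.X ^ ((p.2 : ℕ)) * G (p.1 : ℕ) i).natDegree ≤ M + (l' + 1 + 1) * d := by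
      refine Polynomial.natDegree_mul_le.trans ?_
      have hGd := (hG (p.1 : ℕ) (by have := p.1.isLt; omega)).1 i
      have h2 : ((Polynomial.X : Polynomial F) ^ ((p.2 : ℕ))).natDegree ≤ M := by
        rw [Polynomial.natDegree_X_pow]; have := p.2.isLt; omega
      omega
    refine lt_of_le_of_lt Polynomial.degree_le_natDegree ?_
    exact_mod_cast (by omega : (Polynomial.X ^ ((p.2 : ℕ)) * G (p.1 : ℕ) i).natDegree < A1)
  have hmemH : ∀ (p : Fin (K + 1) × Fin (M + 1)) (i : Fin (l' + 1)),
      (Polynomial.X ^ ((p.2 : ℕ)) * H (p.1 : ℕ) i) ∈ Polynomial.degreeLT F A2 := by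
    intro p i
    rw [Polynomial.mem_degreeLT]
    have h1 : (Polynomial.X ^ ((p.2 : ℕ)) * H (p.1 : ℕ) i).natDegree ≤ M + (k' + 1 + 1) * d := by
      refine Polynomial.natDegree_mul_le.trans ?_
      have hHd := (hHb (p.1 : ℕ) (by have := p.1.isLt; omega)).1 i
      have h2 : ((Polynomial.X : Polynomial F) ^ ((p.2 : ℕ))).natDegree ≤ M := by
        rw [Polynomial.natDegree_X_pow]; have := p.2.isLt; omega
      omega
    refine lt_of_le_of_lt Polynomial.degree_le_natDegree ?_
    exact_mod_cast (by omega : (Polynomial.X ^ ((p.2 : ℕ)) * H (p.1 : ℕ) i).natDegree < A2)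
  set v : Fin (K + 1) × Fin (M + 1) →
      (Fin (k' + 1) → Polynomial.degreeLT F A1) × (Fin (l' + 1) → Polynomial.degreeLT F A2) :=
    fun p =>
      (fun i => ⟨Polynomial.X ^ ((p.2 : ℕ)) * G (p.1 : ℕ) i, hmemG p i⟩,
       fun i => ⟨Polynomial.X ^ ((p.2 : ℕ)) * H (p.1 : ℕ) i, hmemH p i⟩) with hv
  have hfrW : Module.finrank F
      ((Fin (k' + 1) → Polynomial.degreeLT F A1) × (Fin (l' + 1) → Polynomial.degreeLT F A2))
      = (k' + 1) * A1 + (l' + 1) * A2 := by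
    rw [Module.finrank_prod, Module.finrank_pi_fintype, Module.finrank_pi_fintype]
    simp [finrank_degreeLT]
  have hdep : ¬ LinearIndependent F v := by
    intro hli
    have hcard := hli.fintype_card_le_finrank
    rw [hfrW, Fintype.card_prod, Fintype.card_fin, Fintype.card_fin] at hcard
    rw [hA1def, hA2def, hMdef, hKdef] at hcard
    nlinarith [sq_nonneg k', sq_nonneg l', hcard]
  obtain ⟨g, hgsum, p0, hgp0⟩ := Fintype.not_linearIndependent_iff.mp hdep
  set z : Fin (K + 1) → Polynomial F :=
    fun j => ∑ e : Fin (M + 1), Polynomial.C (g (j, e)) * Polynomial.X ^ (e : ℕ) with hzdef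
  have hcomp1 : ∀ i : Fin (k' + 1),
      ∑ p : Fin (K + 1) × Fin (M + 1), g p • (Polynomial.X ^ ((p.2 : ℕ)) * G (p.1 : ℕ) i) = 0 := by
    intro i
    have h0 := congrArg (fun w : (Fin (k' + 1) → Polynomial.degreeLT F A1) ×
      (Fin (l' + 1) → Polynomial.degreeLT F A2) => ((w.1 i : Polynomial F))) hgsum
    simpa [hv, Prod.fst_sum, Finset.sum_apply, Submodule.coe_sum] using h0
  have hcomp2 : ∀ i : Fin (l' + 1),
      ∑ p : Fin (K + 1) × Fin (M + 1), g p • (Polynomial.X ^ ((p.2 : ℕ)) * H (p.1 : ℕ) i) = 0 := by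
    intro i
    have h0 := congrArg (fun w : (Fin (k' + 1) → Polynomial.degreeLT F A1) ×
      (Fin (l' + 1) → Polynomial.degreeLT F A2) => ((w.2 i : Polynomial F))) hgsum
    simpa [hv, Prod.snd_sum, Finset.sum_apply, Submodule.coe_sum] using h0
  have hz1 : ∀ i : Fin (k' + 1), ∑ j : Fin (K + 1), z j * G (j : ℕ) i = 0 := by
    intro i
    calc ∑ j : Fin (K + 1), z j * G (j : ℕ) i
        = ∑ j : Fin (K + 1), ∑ e : Fin (M + 1), g (j, e) • (Polynomial.X ^ (e : ℕ) * G (j : ℕ) i) := by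
          refine Finset.sum_congr rfl fun j _ => ?_
          rw [hzdef]
          rw [Finset.sum_mul]
          exact Finset.sum_congr rfl fun e _ => by
            rw [Polynomial.smul_eq_C_mul, mul_assoc]
      _ = ∑ p : Fin (K + 1) × Fin (M + 1), g p • (Polynomial.X ^ ((p.2 : ℕ)) * G (p.1 : ℕ) i) := by
          rw [Fintype.sum_prod_type]
      _ = 0 := hcomp1 i
  have hz2 : ∀ i : Fin (l' + 1), ∑ j : Fin (K + 1), z j * H (j : ℕ) i = 0 := by
    intro i
    calc ∑ j : Fin (K + 1), z j * H (j : ℕ) i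
        = ∑ j : Fin (K + 1), ∑ e : Fin (M + 1), g (j, e) • (Polynomial.X ^ (e : ℕ) * H (j : ℕ) i) := by
          refine Finset.sum_congr rfl fun j _ => ?_
          rw [hzdef]
          rw [Finset.sum_mul]
          exact Finset.sum_congr rfl fun e _ => by
            rw [Polynomial.smul_eq_C_mul, mul_assoc]
      _ = ∑ p : Fin (K + 1) × Fin (M + 1), g p • (Polynomial.X ^ ((p.2 : ℕ)) * H (p.1 : ℕ) i) := by
          rw [Fintype.sum_prod_type]
      _ = 0 := hcomp2 i
  have hzne : z p0.1 ≠ 0 := by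
    intro hz0
    apply hgp0
    have hco : (z p0.1).coeff (p0.2 : ℕ) = g (p0.1, p0.2) := by
      rw [hzdef]
      rw [Polynomial.finset_sum_coeff]
      rw [Finset.sum_eq_single p0.2]
      · rw [Polynomial.coeff_C_mul, Polynomial.coeff_X_pow, if_pos rfl, mul_one]
      · intro e _ he
        rw [Polynomial.coeff_C_mul, Polynomial.coeff_X_pow, if_neg, mul_zero]
        exact fun hc => he (Fin.ext (by omega))
      · simp
    rw [hz0] at hco
    simp only [Polynomial.coeff_zero] at hco
    exact hco.symm ▸ rfl
  have hzdeg : ∀ j, (z j).natDegree ≤ M := by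
    intro j
    rw [hzdef]
    refine Polynomial.natDegree_sum_le_of_forall_le _ _ fun e _ => ?_
    refine (Polynomial.natDegree_C_mul_le _ _).trans ?_
    rw [Polynomial.natDegree_X_pow]
    have := e.isLt; omega
  have hmain : ∀ n : ℕ,
      ∑ j : Fin (K + 1), (z j).eval (n : F) * (P (n + (j : ℕ)) + Q (n + (j : ℕ))) = 0 := by
    intro n
    have hDP : (∏ s ∈ Finset.range (l' + 1 + 1), (a 0).eval ((n : F) + s)) ≠ 0 := by
      refine Finset.prod_ne_zero_iff.mpr fun s _ => ?_
      have hcast : ((n : F) + s) = ((n + s : ℕ) : F) := by push_cast; ring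
      rw [hcast]; exact ha0 (n + s)
    have hDQ : (∏ s ∈ Finset.range (k' + 1 + 1), (b 0).eval ((n : F) + s)) ≠ 0 := by
      refine Finset.prod_ne_zero_iff.mpr fun s _ => ?_
      have hcast : ((n : F) + s) = ((n + s : ℕ) : F) := by push_cast; ring
      rw [hcast]; exact hb0 (n + s)
    refine mul_left_cancel₀ (mul_ne_zero hDP hDQ) ?_
    rw [mul_zero]
    set DP := ∏ s ∈ Finset.range (l' + 1 + 1), (a 0).eval ((n : F) + s) with hDPdef
    set DQ := ∏ s ∈ Finset.range (k' + 1 + 1), (b 0).eval ((n : F) + s) with hDQdef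
    have hG0 : ∀ i : Fin (k' + 1),
        ∑ j : Fin (K + 1), (z j).eval (n : F) * (G (j : ℕ) i).eval (n : F) = 0 := by
      intro i
      have hh := congrArg (Polynomial.eval ((n : F))) (hz1 i)
      simpa [Polynomial.eval_finset_sum] using hh
    have hH0 : ∀ i : Fin (l' + 1),
        ∑ j : Fin (K + 1), (z j).eval (n : F) * (H (j : ℕ) i).eval (n : F) = 0 := by
      intro i
      have hh := congrArg (Polynomial.eval ((n : F))) (hz2 i)
      simpa [Polynomial.eval_finset_sum] using hh
    calc DP * DQ * ∑ j : Fin (K + 1), (z j).eval (n : F) * (P (n + (j : ℕ)) + Q (n + (j : ℕ)))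
        = ∑ j : Fin (K + 1), (z j).eval (n : F) * (DQ * (DP * P (n + (j : ℕ))))
          + ∑ j : Fin (K + 1), (z j).eval (n : F) * (DP * (DQ * Q (n + (j : ℕ)))) := by
          rw [Finset.mul_sum, ← Finset.sum_add_distrib]
          exact Finset.sum_congr rfl fun j _ => by ring
      _ = ∑ j : Fin (K + 1), (z j).eval (n : F) *
            (DQ * ∑ i : Fin (k' + 1), (G (j : ℕ) i).eval (n : F) * P (n + (i : ℕ)))
          + ∑ j : Fin (K + 1), (z j).eval (n : F) *
            (DP * ∑ i : Fin (l' + 1), (H (j : ℕ) i).eval (n : F) * Q (n + (i : ℕ))) := by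
          congr 1
          · exact Finset.sum_congr rfl fun j _ => by
              rw [(hG (j : ℕ) (by have := j.isLt; omega)).2 n]
          · exact Finset.sum_congr rfl fun j _ => by
              rw [(hHb (j : ℕ) (by have := j.isLt; omega)).2 n]
      _ = DQ * ∑ i : Fin (k' + 1),
            (∑ j : Fin (K + 1), (z j).eval (n : F) * (G (j : ℕ) i).eval (n : F)) * P (n + (i : ℕ))
          + DP * ∑ i : Fin (l' + 1),
            (∑ j : Fin (K + 1), (z j).eval (n : F) * (H (j : ℕ) i).eval (n : F)) * Q (n + (i : ℕ)) := by
          rw [swap_sum, swap_sum]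
      _ = 0 := by
          have e1 : ∑ i : Fin (k' + 1),
              (∑ j : Fin (K + 1), (z j).eval (n : F) * (G (j : ℕ) i).eval (n : F)) * P (n + (i : ℕ)) = 0 := by
            refine Finset.sum_eq_zero fun i _ => ?_
            rw [hG0 i, zero_mul]
          have e2 : ∑ i : Fin (l' + 1),
              (∑ j : Fin (K + 1), (z j).eval (n : F) * (H (j : ℕ) i).eval (n : F)) * Q (n + (i : ℕ)) = 0 := by
            refine Finset.sum_eq_zero fun i _ => ?_
            rw [hH0 i, zero_mul]
          rw [e1, e2, mul_zero, mul_zero, add_zero]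
  refine ⟨K, fun i => z i.rev, by omega, ⟨(p0.1).rev, by simpa [Fin.rev_rev] using hzne⟩,
    fun i => ?_, 0, fun n _ => ?_⟩
  · exact Polynomial.natDegree_le_iff_degree_le.mp (hzdeg i.rev)
  · calc ∑ i : Fin (K + 1), (z i.rev).eval (n : F) * (P (n + (K - (i : ℕ))) + Q (n + (K - (i : ℕ))))
        = ∑ j : Fin (K + 1), (z j).eval (n : F) * (P (n + (j : ℕ)) + Q (n + (j : ℕ))) := by
          refine Fintype.sum_equiv Fin.revPerm _ _ fun i => ?_
          have h1 : ((Fin.revPerm i : Fin (K + 1)) : ℕ) = K - (i : ℕ) := by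
            show ((i.rev : Fin (K + 1)) : ℕ) = K - (i : ℕ)
            rw [Fin.val_rev]
            omega
          rw [h1]
          rfl
      _ = 0 := hmain n
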